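/- Under Assumption 2.1, the step-size bound 0 < w ≤ min{1, 𝔡/√(2β⁻¹(J(z⁰) − inf F)), (β − ε)/(2C·A_max)} for some β, ε > 0, and sequences (z^k), (x̃^k) with z^{k+1} = (1 − w)z^k + w·x̃^k, J̃_{z^k}(x̃^k) ≤ J̃_{z^k}(z^k), and e^k ∈ ∂J̃_{z^k}(x̃^k) with e^k → 0 (where J̃_z(x) := (1/2)‖A(z) + A'(z)(x − z)‖² + F(x) + (β/2)‖x − z‖² and ∂ is the convex subdifferential), every accumulation point x̂ of (z^k) satisfies the criticality condition −A'(x̂)*A(x̂) ∈ ∂F(x̂), i.e. F(y) ≥ F(x̂) − ⟨A'(x̂)*A(x̂), y − x̂⟩ for all y, and J(x̂) = L where L := lim_k J(z^k) (Theorem 2.1(ii)). -/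

import Mathlib

open Filter Topology Metric Bornology
open scoped RealInnerProductSpace

/-- The objective `J(x) = (1/2)‖A(x)‖² + F(x)` with extended-real-valued `F`. -/
noncomputable def Jobj {N M : ℕ} (F : EuclideanSpace ℝ (Fin N) → EReal)
    (A : EuclideanSpace ℝ (Fin N) → EuclideanSpace ℝ (Fin M))
    (x : EuclideanSpace ℝ (Fin N)) : EReal :=
  ((1 / 2 * ‖A x‖ ^ 2 : ℝ) : EReal) + F x

/-- The linearisation `A_z(x) = A(z) + A'(z)(x − z)`. -/
noncomputable def Alin {N M : ℕ}
    (A : EuclideanSpace ℝ (Fin N) → EuclideanSpace ℝ (Fin M))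
    (A' : EuclideanSpace ℝ (Fin N) → (EuclideanSpace ℝ (Fin N) →L[ℝ] EuclideanSpace ℝ (Fin M)))
    (z x : EuclideanSpace ℝ (Fin N)) : EuclideanSpace ℝ (Fin M) :=
  A z + A' z (x - z)

/-- The linearised objective `J_z(x) = (1/2)‖A_z(x)‖² + F(x)`. -/
noncomputable def Jlin {N M : ℕ} (F : EuclideanSpace ℝ (Fin N) → EReal)
    (A : EuclideanSpace ℝ (Fin N) → EuclideanSpace ℝ (Fin M))
    (A' : EuclideanSpace ℝ (Fin N) → (EuclideanSpace ℝ (Fin N) →L[ℝ] EuclideanSpace ℝ (Fin M)))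
    (z x : EuclideanSpace ℝ (Fin N)) : EReal :=
  ((1 / 2 * ‖Alin A A' z x‖ ^ 2 : ℝ) : EReal) + F x

/-- The proximally relaxed linearised objective `J̃_z(x) = J_z(x) + (β/2)‖x − z‖²`. -/
noncomputable def Jprox {N M : ℕ} (F : EuclideanSpace ℝ (Fin N) → EReal)
    (A : EuclideanSpace ℝ (Fin N) → EuclideanSpace ℝ (Fin M))
    (A' : EuclideanSpace ℝ (Fin N) → (EuclideanSpace ℝ (Fin N) →L[ℝ] EuclideanSpace ℝ (Fin M)))
    (β : ℝ) (z x : EuclideanSpace ℝ (Fin N)) : EReal :=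
  Jlin F A A' z x + ((β / 2 * ‖x - z‖ ^ 2 : ℝ) : EReal)

/-- Convexity of the squared norm. -/
lemma combo_norm_sq_le {E : Type*} [NormedAddCommGroup E] [InnerProductSpace ℝ E]
    (a b : ℝ) (x y : E) (ha : 0 ≤ a) (hb : 0 ≤ b) (hab : a + b = 1) :
    ‖a • x + b • y‖ ^ 2 ≤ a * ‖x‖ ^ 2 + b * ‖y‖ ^ 2 := by
  have h1 : ‖a • x + b • y‖ ^ 2
      = a ^ 2 * ‖x‖ ^ 2 + 2 * (a * b) * ⟪x, y⟫ + b ^ 2 * ‖y‖ ^ 2 := by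
    rw [norm_add_sq_real, real_inner_smul_left, real_inner_smul_right, norm_smul, norm_smul]
    simp only [Real.norm_eq_abs, abs_of_nonneg ha, abs_of_nonneg hb]
    ring
  have h2 : 0 ≤ ‖x‖ ^ 2 + ‖y‖ ^ 2 - 2 * ⟪x, y⟫ := by
    nlinarith [norm_sub_sq_real x y, sq_nonneg ‖x - y‖]
  nlinarith [mul_nonneg (mul_nonneg ha hb) h2, h1]

/-- A sequential lower-semicontinuity estimate for `EReal`-valued functions. -/
lemma lsc_seq_le {α : Type*} [TopologicalSpace α] {F : α → EReal}
    (hF : LowerSemicontinuous F) {xn : ℕ → α} {x : α}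
    (hx : Filter.Tendsto xn Filter.atTop (𝓝 x)) {cn : ℕ → ℝ} {c : ℝ}
    (hc : Filter.Tendsto cn Filter.atTop (𝓝 c))
    (hle : ∀ k, F (xn k) ≤ (cn k : EReal)) : F x ≤ (c : EReal) := by
  by_contra h
  push_neg at h
  obtain ⟨b, hb1, hb2⟩ := exists_between h
  have h1 : ∀ᶠ k in atTop, b < F (xn k) := hx.eventually (hF x b hb2)
  have h2 : ∀ᶠ k in atTop, ((cn k : ℝ) : EReal) < b :=
    (EReal.tendsto_coe.2 hc).eventually_lt_const hb1
  obtain ⟨k, hk1, hk2⟩ := (h1.and h2).exists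
  exact lt_irrefl b (lt_trans (lt_of_lt_of_le hk1 (hle k)) hk2)

set_option maxHeartbeats 4000000 in
/-- Theorem 2.1(ii): every accumulation point `x̂` of `(z^k)` satisfies the
criticality condition `−A'(x̂)*A(x̂) ∈ ∂F(x̂)` and `J(x̂) = L := lim_k J(z^k)`. -/
theorem stmt_7 {N M : ℕ}
    (F : EuclideanSpace ℝ (Fin N) → EReal)
    (A : EuclideanSpace ℝ (Fin N) → EuclideanSpace ℝ (Fin M))
    (A' : EuclideanSpace ℝ (Fin N) → (EuclideanSpace ℝ (Fin N) →L[ℝ] EuclideanSpace ℝ (Fin M)))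
    -- Assumption 2.1
    (hFconv : ∀ x y : EuclideanSpace ℝ (Fin N), ∀ a b : ℝ, 0 ≤ a → 0 ≤ b → a + b = 1 →
      F (a • x + b • y) ≤ (a : EReal) * F x + (b : EReal) * F y)
    (hFproper : ∃ x, F x ≠ ⊤)
    (hFnebot : ∀ x, F x ≠ ⊥)
    (hFlsc : LowerSemicontinuous F)
    (hInf : ⊥ < ⨅ x, F x)
    (hderiv : ∀ x, F x ≠ ⊤ → HasFDerivAt A (A' x) x)
    (hA'cont : ContinuousOn A' {x | F x ≠ ⊤})
    (z xt : ℕ → EuclideanSpace ℝ (Fin N))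
    (hz0 : F (z 0) ≠ ⊤)
    (hlev : IsBounded {x | Jobj F A x ≤ Jobj F A (z 0)})
    (Amax C dd : ℝ) (hC : 0 < C) (hdd : 0 < dd)
    (hAmax : ∀ x, F x ≠ ⊤ → ‖A x‖ ≤ Amax)
    (herr : ∀ y, Jobj F A y ≤ Jobj F A (z 0) → ∀ x ∈ closedBall y dd,
      ‖A x - Alin A A' y x‖ ≤ C * ‖x - y‖ ^ 2)
    -- the step-size bound (2.3)
    (β ε w : ℝ) (hβ : 0 < β) (hε : 0 < ε)
    (hw0 : 0 < w) (hw1 : w ≤ 1)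
    (hw2 : w ≤ dd / Real.sqrt (2 * β⁻¹ * (Jobj F A (z 0) - ⨅ x, F x).toReal))
    (hw3 : w ≤ (β - ε) / (2 * C * Amax))
    -- the iteration
    (hrec : ∀ k, z (k + 1) = (1 - w) • z k + w • xt k)
    (hdec : ∀ k, Jprox F A A' β (z k) (xt k) ≤ Jprox F A A' β (z k) (z k))
    -- the inexact subdifferential condition: `e^k ∈ ∂J̃_{z^k}(x̃^k)` with `e^k → 0`
    (e : ℕ → EuclideanSpace ℝ (Fin N))
    (he : ∀ k y, Jprox F A A' β (z k) (xt k) + ((⟪e k, y - xt k⟫ : ℝ) : EReal)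
      ≤ Jprox F A A' β (z k) y)
    (he0 : Tendsto e atTop (𝓝 0)) :
    ∃ L : ℝ, Tendsto (fun k => Jobj F A (z k)) atTop (𝓝 ((L : ℝ) : EReal)) ∧
      ∀ xh : EuclideanSpace ℝ (Fin N),
        (∃ φ : ℕ → ℕ, StrictMono φ ∧ Tendsto (z ∘ φ) atTop (𝓝 xh)) →
        (∀ y, F xh + ((-⟪(ContinuousLinearMap.adjoint (A' xh)) (A xh), y - xh⟫ : ℝ) : EReal)
            ≤ F y) ∧
          Jobj F A xh = ((L : ℝ) : EReal) := by
  classical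
  -- basic coercion facts
  have coeF : ∀ x, F x ≠ ⊤ → F x = (((F x).toReal : ℝ) : EReal) :=
    fun x hx => (EReal.coe_toReal hx (hFnebot x)).symm
  have Jobj_eq : ∀ x (r : ℝ), F x = (r : EReal) →
      Jobj F A x = ((1 / 2 * ‖A x‖ ^ 2 + r : ℝ) : EReal) := by
    intro x r hr
    rw [Jobj, hr, ← EReal.coe_add]
  have Jprox_eq : ∀ zz x (r : ℝ), F x = (r : EReal) →
      Jprox F A A' β zz x
        = ((1 / 2 * ‖Alin A A' zz x‖ ^ 2 + r + β / 2 * ‖x - zz‖ ^ 2 : ℝ) : EReal) := by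
    intro zz x r hr
    rw [Jprox, Jlin, hr, ← EReal.coe_add, ← EReal.coe_add]
  have hAlin_self : ∀ zz, Alin A A' zz zz = A zz := by
    intro zz; simp [Alin]
  -- the infimum of F
  have hm_le : ∀ x, (⨅ x, F x) ≤ F x := fun x => iInf_le _ x
  have hm_top : (⨅ x, F x) ≠ ⊤ :=
    (lt_of_le_of_lt (hm_le (z 0)) (lt_top_iff_ne_top.2 hz0)).ne
  have hm_bot : (⨅ x, F x) ≠ ⊥ := hInf.ne'
  set mR : ℝ := (⨅ x, F x).toReal with hmRdef
  have hm_coe : ((mR : ℝ) : EReal) = ⨅ x, F x := EReal.coe_toReal hm_top hm_bot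
  clear_value mR
  have hmFz : ∀ x, F x ≠ ⊤ → mR ≤ (F x).toReal := by
    intro x hx
    have h1 := hm_le x
    rw [← hm_coe, coeF x hx] at h1
    exact_mod_cast h1
  set dk : ℕ → ℝ := fun k => ‖xt k - z k‖ with hdk
  set jz : ℕ → ℝ := fun k => 1 / 2 * ‖A (z k)‖ ^ 2 + (F (z k)).toReal with hjz
  clear_value dk jz
  have hdknn : ∀ k, 0 ≤ dk k := by intro k; simp only [hdk]; exact norm_nonneg _
  have hJ0 : Jobj F A (z 0) = ((jz 0 : ℝ) : EReal) := by
    simp only [hjz]; exact Jobj_eq _ _ (coeF _ hz0)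
  have hsub : (Jobj F A (z 0) - ⨅ x, F x).toReal = jz 0 - mR := by
    rw [hJ0, ← hm_coe, ← EReal.coe_sub, EReal.toReal_coe]
  rw [hsub] at hw2
  set R : ℝ := Real.sqrt (2 * β⁻¹ * (jz 0 - mR)) with hRdef
  clear_value R
  have hR0 : 0 < R := by
    rcases (Real.sqrt_nonneg (2 * β⁻¹ * (jz 0 - mR))).lt_or_eq with h | h
    · rw [hRdef]; exact h
    · exfalso; rw [hRdef, ← h, div_zero] at hw2; linarith
  have hwR : w * R ≤ dd := (le_div_iff₀ hR0).1 hw2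
  have hAmax0 : 0 ≤ Amax := le_trans (norm_nonneg _) (hAmax _ hz0)
  have hAmaxpos : 0 < Amax := by
    rcases hAmax0.lt_or_eq with h | h
    · exact h
    · exfalso; rw [← h, mul_zero, div_zero] at hw3; linarith
  have hwA : w * (2 * C * Amax) ≤ β - ε :=
    (le_div_iff₀ (mul_pos (mul_pos two_pos hC) hAmaxpos)).1 hw3
  -- the one-step estimate
  have step : ∀ k, F (z k) ≠ ⊤ → jz k ≤ jz 0 →
      F (xt k) ≠ ⊤ ∧ F (z (k + 1)) ≠ ⊤ ∧
      jz (k + 1) + w * (ε / 2) * (dk k) ^ 2 ≤ jz k ∧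
      jz (k + 1) ≤ (1 - w) * jz k + w * (1 / 2 * ‖Alin A A' (z k) (xt k)‖ ^ 2
        + (F (xt k)).toReal + β / 2 * (dk k) ^ 2) := by
    intro k hk hjk
    have hprox_zz : Jprox F A A' β (z k) (z k) = ((jz k : ℝ) : EReal) := by
      rw [Jprox_eq (z k) (z k) _ (coeF _ hk)]
      simp only [hAlin_self, sub_self, norm_zero, hjz]
      norm_num
    have hd := hdec k
    rw [hprox_zz] at hd
    have hxt_top : F (xt k) ≠ ⊤ := by
      intro h
      rw [Jprox, Jlin, h] at hd
      simp only [EReal.coe_add_top, EReal.top_add_of_ne_bot (EReal.coe_ne_bot _)] at hd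
      exact EReal.coe_ne_top _ (top_le_iff.1 hd)
    have hq_le : 1 / 2 * ‖Alin A A' (z k) (xt k)‖ ^ 2 + (F (xt k)).toReal
        + β / 2 * (dk k) ^ 2 ≤ jz k := by
      rw [Jprox_eq (z k) (xt k) _ (coeF _ hxt_top)] at hd
      simp only [hdk]
      exact_mod_cast hd
    have hfx_m : mR ≤ (F (xt k)).toReal := hmFz _ hxt_top
    have hnn1 : (0:ℝ) ≤ 1 / 2 * ‖Alin A A' (z k) (xt k)‖ ^ 2 := by positivity
    have hkey : β / 2 * (dk k) ^ 2 ≤ jz 0 - mR := by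
      linarith only [hq_le, hfx_m, hnn1, hjk]
    have h0R : 0 ≤ jz 0 - mR :=
      le_trans (mul_nonneg (div_nonneg hβ.le (by norm_num)) (sq_nonneg _)) hkey
    have hinvβ : β⁻¹ * β = 1 := inv_mul_cancel₀ hβ.ne'
    have hR2 : R ^ 2 = 2 * β⁻¹ * (jz 0 - mR) := by
      rw [hRdef]
      exact Real.sq_sqrt (mul_nonneg (mul_nonneg (by norm_num) (inv_nonneg.2 hβ.le)) h0R)
    have hd2 : (dk k) ^ 2 ≤ R ^ 2 := by
      rw [hR2]
      have h1 := mul_le_mul_of_nonneg_left hkey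
        (mul_nonneg (by norm_num : (0:ℝ) ≤ 2) (inv_nonneg.2 hβ.le))
      have h2 : 2 * β⁻¹ * (β / 2 * (dk k) ^ 2) = (dk k) ^ 2 := by
        field_simp
      linarith only [h1, h2]
    have hdkR : dk k ≤ R := le_of_pow_le_pow_left₀ two_ne_zero hR0.le hd2
    have hzd : z (k + 1) - z k = w • (xt k - z k) := by rw [hrec k]; module
    have hznorm : ‖z (k + 1) - z k‖ = w * dk k := by
      rw [hzd, norm_smul, Real.norm_eq_abs, abs_of_pos hw0]; simp only [hdk]
    have hzball : ‖z (k + 1) - z k‖ ≤ dd := by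
      rw [hznorm]
      calc w * dk k ≤ w * R := mul_le_mul_of_nonneg_left hdkR hw0.le
        _ ≤ dd := hwR
    have hjzk' : Jobj F A (z k) = ((jz k : ℝ) : EReal) := by
      simp only [hjz]; exact Jobj_eq _ _ (coeF _ hk)
    have hJzk : Jobj F A (z k) ≤ Jobj F A (z 0) := by
      rw [hjzk', hJ0]
      exact_mod_cast hjk
    have herrk : ‖A (z (k + 1)) - Alin A A' (z k) (z (k + 1))‖ ≤ C * (w * dk k) ^ 2 := by
      have h1 := herr (z k) hJzk (z (k + 1))
        (by rw [mem_closedBall_iff_norm]; exact hzball)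
      rwa [hznorm] at h1
    have hcombo : Alin A A' (z k) (z (k + 1))
        = (1 - w) • A (z k) + w • Alin A A' (z k) (xt k) := by
      simp only [Alin, hzd, map_smul]
      module
    have hconv2 : 1 / 2 * ‖Alin A A' (z k) (z (k + 1))‖ ^ 2
        ≤ (1 - w) * (1 / 2 * ‖A (z k)‖ ^ 2)
          + w * (1 / 2 * ‖Alin A A' (z k) (xt k)‖ ^ 2) := by
      rw [hcombo]
      have := combo_norm_sq_le (1 - w) w (A (z k)) (Alin A A' (z k) (xt k))
        (by linarith) hw0.le (by ring)
      linarith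
    have hFz1 : F (z (k + 1))
        ≤ (((1 - w) * (F (z k)).toReal + w * (F (xt k)).toReal : ℝ) : EReal) := by
      have h1 := hFconv (z k) (xt k) (1 - w) w (by linarith) hw0.le (by ring)
      rw [← hrec k, coeF _ hk, coeF _ hxt_top, ← EReal.coe_mul, ← EReal.coe_mul,
        ← EReal.coe_add] at h1
      exact h1
    have hz1_top : F (z (k + 1)) ≠ ⊤ := ne_top_of_le_ne_top (EReal.coe_ne_top _) hFz1
    have hfz1 : (F (z (k + 1))).toReal
        ≤ (1 - w) * (F (z k)).toReal + w * (F (xt k)).toReal := by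
      rw [coeF _ hz1_top] at hFz1
      exact_mod_cast hFz1
    have hAz1 : ‖A (z (k + 1))‖ ≤ Amax := hAmax _ hz1_top
    have hinner : ⟪A (z (k + 1)), A (z (k + 1)) - Alin A A' (z k) (z (k + 1))⟫
        ≤ Amax * (C * (w * dk k) ^ 2) :=
      le_trans (real_inner_le_norm _ _) (mul_le_mul hAz1 herrk (norm_nonneg _) hAmax0)
    have hquad : 1 / 2 * ‖A (z (k + 1))‖ ^ 2
        ≤ 1 / 2 * ‖Alin A A' (z k) (z (k + 1))‖ ^ 2 + Amax * (C * (w * dk k) ^ 2) := by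
      have hid := norm_sub_sq_real (A (z (k + 1)))
        (A (z (k + 1)) - Alin A A' (z k) (z (k + 1)))
      rw [sub_sub_cancel] at hid
      linarith only [hid, hinner,
        sq_nonneg ‖A (z (k + 1)) - Alin A A' (z k) (z (k + 1))‖]
    have hjz1 : jz (k + 1) ≤ (1 - w) * jz k
        + w * (1 / 2 * ‖Alin A A' (z k) (xt k)‖ ^ 2 + (F (xt k)).toReal
          + β / 2 * (dk k) ^ 2)
        - w * (β / 2) * (dk k) ^ 2 + Amax * (C * (w * dk k) ^ 2) := by
      simp only [hjz]
      linarith only [hconv2, hfz1, hquad]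
    have habs : Amax * (C * (w * dk k) ^ 2) ≤ (β - ε) / 2 * (w * (dk k) ^ 2) := by
      linarith only [mul_le_mul_of_nonneg_right hwA
        (show (0:ℝ) ≤ w * (dk k) ^ 2 / 2 from
          div_nonneg (mul_nonneg hw0.le (sq_nonneg (dk k))) (by norm_num))]
    have hqq : w * (1 / 2 * ‖Alin A A' (z k) (xt k)‖ ^ 2 + (F (xt k)).toReal
        + β / 2 * (dk k) ^ 2) ≤ w * jz k := mul_le_mul_of_nonneg_left hq_le hw0.le
    have hwdk2 : (0:ℝ) ≤ w * (dk k) ^ 2 := mul_nonneg hw0.le (sq_nonneg _)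
    refine ⟨hxt_top, hz1_top, by linarith, by linarith [mul_nonneg hε.le hwdk2]⟩
  -- induction: the iterates stay in the sublevel set
  have key : ∀ k, F (z k) ≠ ⊤ ∧ jz k ≤ jz 0 := by
    intro k
    induction k with
    | zero => exact ⟨hz0, le_refl _⟩
    | succ n ih =>
      obtain ⟨h1, h2⟩ := ih
      obtain ⟨_, h3, h4, _⟩ := step n h1 h2
      have h5 : (0:ℝ) ≤ w * (ε / 2) * (dk n) ^ 2 :=
        mul_nonneg (mul_nonneg hw0.le (by linarith)) (sq_nonneg _)
      exact ⟨h3, by linarith⟩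
  have hFz : ∀ k, F (z k) ≠ ⊤ := fun k => (key k).1
  have hFxt : ∀ k, F (xt k) ≠ ⊤ := fun k => (step k (hFz k) (key k).2).1
  have hdecr : ∀ k, jz (k + 1) + w * (ε / 2) * (dk k) ^ 2 ≤ jz k :=
    fun k => (step k (hFz k) (key k).2).2.2.1
  have hqlow : ∀ k, jz (k + 1) ≤ (1 - w) * jz k
      + w * (1 / 2 * ‖Alin A A' (z k) (xt k)‖ ^ 2 + (F (xt k)).toReal
        + β / 2 * (dk k) ^ 2) :=
    fun k => (step k (hFz k) (key k).2).2.2.2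
  have hjz_anti : Antitone jz := antitone_nat_of_succ_le (fun n => by
    have h1 := hdecr n
    have h2 : (0:ℝ) ≤ w * (ε / 2) * (dk n) ^ 2 :=
      mul_nonneg (mul_nonneg hw0.le (by linarith)) (sq_nonneg _)
    linarith)
  have hjz_bdd : ∀ k, mR ≤ jz k := by
    intro k
    have h1 := hmFz _ (hFz k)
    simp only [hjz]
    linarith only [h1, sq_nonneg ‖A (z k)‖]
  have hLt : Tendsto jz atTop (𝓝 (⨅ k, jz k)) :=
    tendsto_atTop_ciInf hjz_anti ⟨mR, by rintro x ⟨k, rfl⟩; exact hjz_bdd k⟩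
  set Lv : ℝ := ⨅ k, jz k with hLvdef
  have hLlb : ∀ k, Lv ≤ jz k := fun k =>
    ciInf_le ⟨mR, by rintro x ⟨k, rfl⟩; exact hjz_bdd k⟩ k
  clear_value Lv
  -- the real form of the subdifferential inequality
  have heR : ∀ k (y : EuclideanSpace ℝ (Fin N)) (r : ℝ), F y = (r : EReal) →
      1 / 2 * ‖Alin A A' (z k) (xt k)‖ ^ 2 + (F (xt k)).toReal + β / 2 * (dk k) ^ 2
        + ⟪e k, y - xt k⟫
      ≤ 1 / 2 * ‖Alin A A' (z k) y‖ ^ 2 + r + β / 2 * ‖y - z k‖ ^ 2 := by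
    intro k y r hr
    have h1 := he k y
    rw [Jprox_eq (z k) (xt k) _ (coeF _ (hFxt k)), Jprox_eq (z k) y r hr,
      ← EReal.coe_add] at h1
    simp only [hdk]
    exact_mod_cast h1
  refine ⟨Lv, ?_, ?_⟩
  · have hfe : (fun k => Jobj F A (z k)) = fun k => ((jz k : ℝ) : EReal) := by
      funext k
      simp only [hjz]
      exact Jobj_eq _ _ (coeF _ (hFz k))
    rw [hfe]
    exact EReal.tendsto_coe.2 hLt
  · -- summability of the step lengths
    have hsumb : ∀ n, ∑ i ∈ Finset.range n, (dk i) ^ 2 ≤ (jz 0 - mR) / (w * (ε / 2)) := by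
      intro n
      have htel : w * (ε / 2) * ∑ i ∈ Finset.range n, (dk i) ^ 2 ≤ jz 0 - jz n := by
        induction n with
        | zero => simp
        | succ m ih =>
          rw [Finset.sum_range_succ, mul_add]
          have := hdecr m
          linarith
      have h2 := hjz_bdd n
      rw [le_div_iff₀ (mul_pos hw0 (by linarith))]
      linarith
    have hsum : Summable (fun k => (dk k) ^ 2) :=
      summable_of_sum_range_le (fun n => sq_nonneg _) hsumb
    have hdkt : Tendsto dk atTop (𝓝 0) := by
      have h2 := hsum.tendsto_atTop_zero
      have h3 := (Real.continuous_sqrt.tendsto 0).comp h2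
      have h4 : (fun k => Real.sqrt ((dk k) ^ 2)) = dk := by
        funext k
        exact Real.sqrt_sq (hdknn k)
      rw [Real.sqrt_zero] at h3
      rwa [show (Real.sqrt ∘ fun k => (dk k) ^ 2) = dk from h4] at h3
    rintro xh ⟨φ, hφm, hzφ⟩
    have hφt : Tendsto φ atTop atTop := hφm.tendsto_atTop
    have hzφ' : Tendsto (fun k => z (φ k)) atTop (𝓝 xh) := hzφ
    have hdφ : Tendsto (fun k => dk (φ k)) atTop (𝓝 0) := hdkt.comp hφt
    have hsub0 : Tendsto (fun k => xt (φ k) - z (φ k)) atTop (𝓝 0) := by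
      refine tendsto_zero_iff_norm_tendsto_zero.2 ?_
      simpa only [hdk] using hdφ
    have hxtφ : Tendsto (fun k => xt (φ k)) atTop (𝓝 xh) := by
      have h1 := hzφ.add hsub0
      simp only [Function.comp] at h1
      simpa using h1
    have hjzφ : Tendsto (fun k => jz (φ k)) atTop (𝓝 Lv) := hLt.comp hφt
    have hFxh : F xh ≠ ⊤ := by
      intro h
      have hev := hFlsc xh ((jz 0 : ℝ) : EReal) (by show ((jz 0 : ℝ) : EReal) < F xh; rw [h]; exact EReal.coe_lt_top _)
      obtain ⟨k, hk⟩ := (hzφ.eventually hev).exists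
      have h2 : F (z (φ k)) ≤ ((jz 0 : ℝ) : EReal) := by
        rw [coeF _ (hFz (φ k))]
        have h3 := (key (φ k)).2
        have h4 : (F (z (φ k))).toReal ≤ jz (φ k) := by
          simp only [hjz]; linarith only [sq_nonneg ‖A (z (φ k))‖]
        exact_mod_cast le_trans h4 h3
      exact absurd (lt_of_lt_of_le hk h2) (lt_irrefl _)
    have hAcont : ContinuousAt A xh := (hderiv xh hFxh).continuousAt
    have hAzφ : Tendsto (fun k => A (z (φ k))) atTop (𝓝 (A xh)) := by
      have := hAcont.tendsto.comp hzφ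
      exact this
    have hA'φ : Tendsto (fun k => A' (z (φ k))) atTop (𝓝 (A' xh)) := by
      have h1 : Tendsto (z ∘ φ) atTop (𝓝[{x | F x ≠ ⊤}] xh) :=
        tendsto_nhdsWithin_iff.2 ⟨hzφ, Eventually.of_forall (fun k => hFz (φ k))⟩
      have := (hA'cont xh hFxh).tendsto.comp h1
      exact this
    have happly : ∀ {vk : ℕ → EuclideanSpace ℝ (Fin N)} {v : EuclideanSpace ℝ (Fin N)},
        Tendsto vk atTop (𝓝 v) →
        Tendsto (fun k => A' (z (φ k)) (vk k)) atTop (𝓝 (A' xh v)) := by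
      intro vk v hv
      have h1 := (isBoundedBilinearMap_apply.continuous.tendsto
        ((A' xh, v) : (EuclideanSpace ℝ (Fin N) →L[ℝ] EuclideanSpace ℝ (Fin M))
          × EuclideanSpace ℝ (Fin N))).comp (hA'φ.prodMk_nhds hv)
      exact h1
    have hAlinxtφ : Tendsto (fun k => Alin A A' (z (φ k)) (xt (φ k))) atTop (𝓝 (A xh)) := by
      have h1 := hAzφ.add (happly hsub0)
      simp only [map_zero, add_zero] at h1
      simpa [Alin] using h1
    have hAliny : ∀ y : EuclideanSpace ℝ (Fin N),
        Tendsto (fun k => Alin A A' (z (φ k)) y) atTop (𝓝 (Alin A A' xh y)) := by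
      intro y
      have h2 : Tendsto (fun k => y - z (φ k)) atTop (𝓝 (y - xh)) :=
        tendsto_const_nhds.sub hzφ
      have h1 := hAzφ.add (happly h2)
      simpa [Alin] using h1
    have heφ : Tendsto (fun k => e (φ k)) atTop (𝓝 0) := he0.comp hφt
    have hdφ2 : Tendsto (fun k => β / 2 * (dk (φ k)) ^ 2) atTop (𝓝 0) := by
      have h1 := (hdφ.pow 2).const_mul (β / 2)
      simpa using h1
    -- the limiting variational inequality
    have star : ∀ (y : EuclideanSpace ℝ (Fin N)) (r : ℝ), F y = (r : EReal) →
        1 / 2 * ‖A xh‖ ^ 2 + (F xh).toReal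
          ≤ 1 / 2 * ‖Alin A A' xh y‖ ^ 2 + r + β / 2 * ‖y - xh‖ ^ 2 := by
      intro y r hr
      set cn : ℕ → ℝ := fun k =>
        (1 / 2 * ‖Alin A A' (z (φ k)) y‖ ^ 2 + r + β / 2 * ‖y - z (φ k)‖ ^ 2)
        - (1 / 2 * ‖Alin A A' (z (φ k)) (xt (φ k))‖ ^ 2 + β / 2 * (dk (φ k)) ^ 2
          + ⟪e (φ k), y - xt (φ k)⟫) with hcn
      clear_value cn
      have hinner0 : Tendsto (fun k => ⟪e (φ k), y - xt (φ k)⟫) atTop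
          (𝓝 (⟪(0 : EuclideanSpace ℝ (Fin N)), y - xh⟫)) :=
        heφ.inner (tendsto_const_nhds.sub hxtφ)
      rw [inner_zero_left] at hinner0
      have hcn_t : Tendsto cn atTop
          (𝓝 ((1 / 2 * ‖Alin A A' xh y‖ ^ 2 + r + β / 2 * ‖y - xh‖ ^ 2)
            - (1 / 2 * ‖A xh‖ ^ 2 + 0 + 0))) := by
        simp only [hcn]
        refine Tendsto.sub ?_ ?_
        · exact ((((hAliny y).norm.pow 2).const_mul (1/2)).add
            (tendsto_const_nhds : Tendsto (fun _ : ℕ => r) atTop (𝓝 r))).add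
            (((tendsto_const_nhds.sub hzφ').norm.pow 2).const_mul (β/2))
        · exact (((hAlinxtφ.norm.pow 2).const_mul (1/2)).add hdφ2).add hinner0
      have hFle : ∀ k, F (xt (φ k)) ≤ ((cn k : ℝ) : EReal) := by
        intro k
        rw [coeF _ (hFxt (φ k))]
        have h1 := heR (φ k) y r hr
        have h2 : (F (xt (φ k))).toReal ≤ cn k := by simp only [hcn]; linarith
        exact_mod_cast h2
      have h3 := lsc_seq_le hFlsc hxtφ hcn_t hFle
      rw [coeF _ hFxh] at h3
      have h4 := EReal.coe_le_coe_iff.1 h3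
      linarith only [h4]
    -- J(xh) ≤ Lv
    have hjxh_le : 1 / 2 * ‖A xh‖ ^ 2 + (F xh).toReal ≤ Lv := by
      have h1 : Tendsto (fun k => jz (φ k) - 1 / 2 * ‖A (z (φ k))‖ ^ 2) atTop
          (𝓝 (Lv - 1 / 2 * ‖A xh‖ ^ 2)) :=
        hjzφ.sub ((hAzφ.norm.pow 2).const_mul (1/2))
      have h2 : ∀ k, F (z (φ k)) ≤ ((jz (φ k) - 1 / 2 * ‖A (z (φ k))‖ ^ 2 : ℝ) : EReal) := by
        intro k
        rw [coeF _ (hFz (φ k))]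
        have : (F (z (φ k))).toReal = jz (φ k) - 1 / 2 * ‖A (z (φ k))‖ ^ 2 := by
          simp only [hjz]; ring
        exact_mod_cast le_of_eq this
      have h3 := lsc_seq_le hFlsc hzφ h1 h2
      rw [coeF _ hFxh] at h3
      have h4 := EReal.coe_le_coe_iff.1 h3
      linarith
    -- Lv ≤ J(xh)
    have hjxh_ge : Lv ≤ 1 / 2 * ‖A xh‖ ^ 2 + (F xh).toReal := by
      have hφ1 : Tendsto (fun k => φ k + 1) atTop atTop :=
        tendsto_atTop_mono (fun k => Nat.le_succ (φ k)) hφt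
      have hjz1φ : Tendsto (fun k => jz (φ k + 1)) atTop (𝓝 Lv) := hLt.comp hφ1
      have hinner0 : Tendsto (fun k => ⟪e (φ k), xh - xt (φ k)⟫) atTop
          (𝓝 (⟪(0 : EuclideanSpace ℝ (Fin N)), xh - xh⟫)) :=
        heφ.inner (tendsto_const_nhds.sub hxtφ)
      rw [inner_zero_left] at hinner0
      have hlk : Tendsto (fun k => jz (φ k + 1) + w * ⟪e (φ k), xh - xt (φ k)⟫) atTop
          (𝓝 (Lv + w * 0)) := hjz1φ.add (hinner0.const_mul w)
      have hAlinxh : Tendsto (fun k => Alin A A' (z (φ k)) xh) atTop (𝓝 (A xh)) := by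
        have h1 := hAliny xh
        rwa [hAlin_self] at h1
      have hsk1 : Tendsto (fun k => xh - z (φ k)) atTop (𝓝 (xh - xh)) :=
        tendsto_const_nhds.sub hzφ'
      rw [sub_self] at hsk1
      have hsk2 : Tendsto (fun k => β / 2 * ‖xh - z (φ k)‖ ^ 2) atTop (𝓝 0) := by
        have h1 := (hsk1.norm.pow 2).const_mul (β / 2)
        simpa using h1
      have hsk : Tendsto (fun k => (1 - w) * jz (φ k)
          + w * (1 / 2 * ‖Alin A A' (z (φ k)) xh‖ ^ 2 + (F xh).toReal
            + β / 2 * ‖xh - z (φ k)‖ ^ 2)) atTop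
          (𝓝 ((1 - w) * Lv + w * (1 / 2 * ‖A xh‖ ^ 2 + (F xh).toReal + 0))) := by
        refine (hjzφ.const_mul (1 - w)).add (Tendsto.const_mul w ?_)
        exact (((hAlinxh.norm.pow 2).const_mul (1/2)).add
          (tendsto_const_nhds : Tendsto (fun _ : ℕ => (F xh).toReal) atTop
            (𝓝 ((F xh).toReal)))).add hsk2
      have hineq : ∀ k, jz (φ k + 1) + w * ⟪e (φ k), xh - xt (φ k)⟫
          ≤ (1 - w) * jz (φ k) + w * (1 / 2 * ‖Alin A A' (z (φ k)) xh‖ ^ 2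
            + (F xh).toReal + β / 2 * ‖xh - z (φ k)‖ ^ 2) := by
        intro k
        have ha := hqlow (φ k)
        have hb := heR (φ k) xh _ (coeF _ hFxh)
        linarith only [ha, mul_le_mul_of_nonneg_left hb hw0.le]
      have h5 : Lv + w * 0 ≤ (1 - w) * Lv
          + w * (1 / 2 * ‖A xh‖ ^ 2 + (F xh).toReal + 0) :=
        le_of_tendsto_of_tendsto' hlk hsk hineq
      have h6 : w * Lv ≤ w * (1 / 2 * ‖A xh‖ ^ 2 + (F xh).toReal) := by
        linarith only [h5]
      exact (mul_le_mul_iff_right₀ hw0).1 h6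
    have hjxh : 1 / 2 * ‖A xh‖ ^ 2 + (F xh).toReal = Lv := le_antisymm hjxh_le hjxh_ge
    constructor
    · -- criticality
      intro u
      by_cases hu : F u = ⊤
      · rw [hu]; exact le_top
      · set v : EuclideanSpace ℝ (Fin M) := A' xh (u - xh) with hv
        set K : ℝ := 1 / 2 * ‖v‖ ^ 2 + β / 2 * ‖u - xh‖ ^ 2 with hK
        clear_value v K
        have ht : ∀ t : ℝ, 0 < t → t ≤ 1 →
            (F xh).toReal - ⟪A xh, v⟫ - (F u).toReal ≤ t * K := by
          intro t ht0 ht1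
          have hyt : F ((1 - t) • xh + t • u)
              ≤ (((1 - t) * (F xh).toReal + t * (F u).toReal : ℝ) : EReal) := by
            have h1 := hFconv xh u (1 - t) t (by linarith) ht0.le (by ring)
            rw [coeF _ hFxh, coeF _ hu, ← EReal.coe_mul, ← EReal.coe_mul,
              ← EReal.coe_add] at h1
            exact h1
          have hyt_top : F ((1 - t) • xh + t • u) ≠ ⊤ :=
            ne_top_of_le_ne_top (EReal.coe_ne_top _) hyt
          have hytR : (F ((1 - t) • xh + t • u)).toReal
              ≤ (1 - t) * (F xh).toReal + t * (F u).toReal := by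
            rw [coeF _ hyt_top] at hyt
            exact_mod_cast hyt
          have hdiff : (1 - t) • xh + t • u - xh = t • (u - xh) := by module
          have hAlin_t : Alin A A' xh ((1 - t) • xh + t • u) = A xh + t • v := by
            simp only [Alin, hdiff, map_smul, hv]
          have hnorm1 : ‖A xh + t • v‖ ^ 2
              = ‖A xh‖ ^ 2 + 2 * t * ⟪A xh, v⟫ + t ^ 2 * ‖v‖ ^ 2 := by
            rw [norm_add_sq_real, real_inner_smul_right, norm_smul, Real.norm_eq_abs,
              abs_of_pos ht0]
            ring
          have hnorm2 : ‖(1 - t) • xh + t • u - xh‖ ^ 2 = t ^ 2 * ‖u - xh‖ ^ 2 := by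
            rw [hdiff, norm_smul, Real.norm_eq_abs, abs_of_pos ht0]
            ring
          have hstar := star ((1 - t) • xh + t • u) _ (coeF _ hyt_top)
          rw [hAlin_t, hnorm1, hnorm2] at hstar
          have hmain : t * ((F xh).toReal - ⟪A xh, v⟫ - (F u).toReal) ≤ t * (t * K) := by
            simp only [hK]
            linarith only [hstar, hytR]
          exact le_of_mul_le_mul_left hmain ht0
        have hK0 : (0:ℝ) ≤ K := by
          simp only [hK]
          have h1 : (0:ℝ) ≤ 1 / 2 * ‖v‖ ^ 2 := by positivity
          have h2 : (0:ℝ) ≤ β / 2 * ‖u - xh‖ ^ 2 :=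
            mul_nonneg (div_nonneg hβ.le (by norm_num)) (sq_nonneg _)
          linarith
        have hfinal : (F xh).toReal - ⟪A xh, v⟫ - (F u).toReal ≤ 0 := by
          have hseq : Tendsto (fun n : ℕ => (1 / ((n : ℝ) + 1)) * K) atTop (𝓝 0) := by
            have := tendsto_one_div_add_atTop_nhds_zero_nat.mul_const K
            simpa using this
          refine ge_of_tendsto hseq (Eventually.of_forall fun n => ?_)
          refine ht _ (by positivity) ?_
          rw [div_le_one (by positivity)]
          linarith [Nat.cast_nonneg (α := ℝ) n]
        rw [coeF _ hFxh, coeF _ hu, ← EReal.coe_add, EReal.coe_le_coe_iff]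
        have hadj : ⟪(ContinuousLinearMap.adjoint (A' xh)) (A xh), u - xh⟫
            = ⟪A xh, v⟫ := by
          rw [hv]
          exact ContinuousLinearMap.adjoint_inner_left (A' xh) (u - xh) (A xh)
        rw [hadj]
        linarith only [hfinal]
    · rw [Jobj_eq _ _ (coeF _ hFxh), EReal.coe_eq_coe_iff]
      exact hjxh
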